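/- If the null p-values are i.i.d. uniform on [0,1] and independent of the non-null p-values, then the Benjamini-Hochberg procedure at level α ∈ (0,1) has false discovery rate exactly equal to α·K₀/K, where K₀ is the number of true nulls and K the total number of hypotheses. -/

import Mathlib

open MeasureTheory ProbabilityTheory Finset
open scoped ENNReal Classical

noncomputable section

/-- The `i`-th smallest value (0-indexed) among `p 0, …, p (K-1)`. -/
def sortAsc {K : ℕ} (p : Fin K → ℝ) : Fin K → ℝ := p ∘ Tuple.sort p

/-- The `i`-th largest value (0-indexed) among `e 0, …, e (K-1)`. -/
def sortDesc {K : ℕ} (e : Fin K → ℝ) : Fin K → ℝ := e ∘ Tuple.sort (fun j => -e j)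

/-- `k* = max {k : K p_(k) / k ≤ α}` (with `max ∅ = 0`), the BH rejection count. -/
def bhCount (K : ℕ) (α : ℝ) (p : Fin K → ℝ) : ℕ :=
  (univ.filter (fun i : Fin K => (K : ℝ) * sortAsc p i / (i.1 + 1) ≤ α)).sup
    (fun i => i.1 + 1)

/-- The BH procedure rejects the hypotheses carrying the `k*` smallest p-values. -/
def bhRejects (K : ℕ) (α : ℝ) (p : Fin K → ℝ) : Finset (Fin K) :=
  univ.filter (fun k => ∃ i : Fin K, i.1 + 1 ≤ bhCount K α p ∧ p k ≤ sortAsc p i)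

/-- `k* = max {k : k e_[k] / K ≥ 1/α}`, the e-BH rejection count. -/
def ebhCount (K : ℕ) (α : ℝ) (e : Fin K → ℝ) : ℕ :=
  (univ.filter (fun i : Fin K => 1 / α ≤ (i.1 + 1) * sortDesc e i / K)).sup
    (fun i => i.1 + 1)

/-- The e-BH procedure rejects the hypotheses carrying the `k*` largest e-values. -/
def ebhRejects (K : ℕ) (α : ℝ) (e : Fin K → ℝ) : Finset (Fin K) :=
  univ.filter (fun k => ∃ i : Fin K, i.1 + 1 ≤ ebhCount K α e ∧ sortDesc e i ≤ e k)

/-- Simes function `S_K(p) = min_k (K/k) p_(k)`. -/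
def simes (K : ℕ) (p : Fin K → ℝ) : ℝ := ⨅ i : Fin K, (K : ℝ) / (i.1 + 1) * sortAsc p i

/-- Harmonic number `ℓ_K = ∑_{k=1}^K 1/k`. -/
def harm (K : ℕ) : ℝ := ∑ k ∈ Finset.Icc 1 K, (1 : ℝ) / k

/-- An increasing (upper) subset of `ℝ^K`. -/
def IncreasingSet {K : ℕ} (A : Set (Fin K → ℝ)) : Prop := ∀ x ∈ A, ∀ y, x ≤ y → y ∈ A

/-- Positive regression dependence on the subset `N` of nulls. -/
def PRDS {Ω : Type*} [MeasurableSpace Ω] (μ : Measure Ω) {K : ℕ}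
    (P : Fin K → Ω → ℝ) (N : Finset (Fin K)) : Prop :=
  ∀ k ∈ N, ∀ A : Set (Fin K → ℝ), MeasurableSet A → IncreasingSet A →
    Monotone (fun x : ℝ => μ[|{ω | P k ω ≤ x}] {ω | (fun j => P j ω) ∈ A})

/-- False discovery proportion of a rejection set `D` w.r.t. the null set `N`. -/
def fdp {K : ℕ} (D N : Finset (Fin K)) : ℝ := ((D ∩ N).card : ℝ) / (max D.card 1 : ℕ)

end

namespace BH

variable {K : ℕ} {α : ℝ}

noncomputable def cnt {K : ℕ} (p : Fin K → ℝ) (t : ℝ) : ℕ :=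
  (Finset.univ.filter fun j => p j ≤ t).card

lemma sortAsc_le_iff (p : Fin K → ℝ) (i : Fin K) (t : ℝ) :
    sortAsc p i ≤ t ↔ i.1 + 1 ≤ cnt p t := by
  have h := Tuple.lt_card_le_iff_apply_le_of_monotone (f := p ∘ Tuple.sort p) (a := t)
    (j := i) (Tuple.monotone_sort p)
  have hcard : Fintype.card {l // (p ∘ Tuple.sort p) l ≤ t} = cnt p t := by
    rw [Fintype.card_subtype]
    refine Finset.card_bij (fun l _ => Tuple.sort p l) ?_ ?_ ?_
    · intro l hl; simp only [Finset.mem_filter, Finset.mem_univ, true_and] at hl ⊢; exact hl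
    · intro a ha b hb hab; exact (Tuple.sort p).injective hab
    · intro j hj
      refine ⟨(Tuple.sort p).symm j, ?_, by simp⟩
      simp only [Finset.mem_filter, Finset.mem_univ, true_and, Function.comp] at hj ⊢
      simpa using hj
  rw [← Fintype.card_subtype, hcard] at h
  show (p ∘ Tuple.sort p) i ≤ t ↔ _
  rw [← h, Nat.lt_iff_add_one_le]

lemma cnt_le (p : Fin K → ℝ) (t : ℝ) : cnt p t ≤ K := by
  simpa [cnt] using (Finset.card_filter_le Finset.univ fun j => p j ≤ t)

lemma cnt_mono (p : Fin K → ℝ) {t t' : ℝ} (h : t ≤ t') : cnt p t ≤ cnt p t' := by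
  apply Finset.card_le_card
  apply Finset.monotone_filter_right
  intro j _ hj
  exact le_trans hj h

lemma cnt_anti {p q : Fin K → ℝ} (h : ∀ j, p j ≤ q j) (t : ℝ) : cnt q t ≤ cnt p t := by
  apply Finset.card_le_card
  apply Finset.monotone_filter_right
  intro j _ hj
  exact le_trans (h j) hj

lemma bhCount_eq (hK : 0 < K) (p : Fin K → ℝ) :
    bhCount K α p
      = (Finset.univ.filter fun i : Fin K => i.1 + 1 ≤ cnt p (α * (i.1 + 1) / K)).sup
          (fun i => i.1 + 1) := by
  unfold bhCount
  congr 1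
  apply Finset.filter_congr
  intro i _
  have h1 : (0:ℝ) < (i.1 : ℝ) + 1 := by positivity
  have h2 : (0:ℝ) < (K:ℝ) := by exact_mod_cast hK
  rw [div_le_iff₀ h1, ← sortAsc_le_iff, le_div_iff₀ h2]
  constructor
  · intro h; linarith [h]
  · intro h; linarith [h]

end BH
-- continuation to be appended
namespace BH2
open BH
variable {K : ℕ} {α : ℝ}

lemma bh_le_K (p : Fin K → ℝ) : bhCount K α p ≤ K := by
  apply Finset.sup_le
  intro i _
  exact i.isLt

lemma cond_le_bh (hK : 0 < K) (p : Fin K → ℝ) (i : Fin K)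
    (h : i.1 + 1 ≤ cnt p (α * (i.1 + 1) / K)) : i.1 + 1 ≤ bhCount K α p := by
  rw [bhCount_eq hK]
  exact Finset.le_sup (f := fun i : Fin K => i.1 + 1) (Finset.mem_filter.mpr ⟨Finset.mem_univ i, h⟩)

lemma bh_attained (hK : 0 < K) (p : Fin K → ℝ) (hR : 1 ≤ bhCount K α p) :
    bhCount K α p ≤ cnt p (α * (bhCount K α p) / K) := by
  rw [bhCount_eq hK] at hR ⊢
  set s := Finset.univ.filter fun i : Fin K => i.1 + 1 ≤ cnt p (α * (i.1 + 1) / K) with hs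
  have hne : s.Nonempty := by
    by_contra hemp
    rw [Finset.not_nonempty_iff_eq_empty] at hemp
    rw [hemp] at hR
    simp at hR
  obtain ⟨i, hi, hsup⟩ := Finset.exists_mem_eq_sup s hne (fun i : Fin K => i.1 + 1)
  rw [hsup]
  rw [hs, Finset.mem_filter] at hi
  exact_mod_cast hi.2

lemma cnt_bh_eq (hK : 0 < K) (hα0 : 0 ≤ α) (p : Fin K → ℝ) (hR : 1 ≤ bhCount K α p) :
    cnt p (α * (bhCount K α p) / K) = bhCount K α p := by
  set R := bhCount K α p with hRdef
  set m := cnt p (α * R / K) with hm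
  have hRm : R ≤ m := bh_attained hK p hR
  have hmK : m ≤ K := cnt_le p _
  have hm1 : 1 ≤ m := le_trans hR hRm
  have : m ≤ R := by
    obtain ⟨j, hj⟩ : ∃ j, m = j + 1 := ⟨m - 1, by omega⟩
    have hiK : j < K := by omega
    have hle : α * (R:ℝ) / K ≤ α * ((j:ℝ) + 1) / K := by
      have h1 : (R:ℝ) ≤ (j:ℝ) + 1 := by exact_mod_cast (by omega : R ≤ j + 1)
      have hK' : (0:ℝ) ≤ (K:ℝ)⁻¹ := by positivity
      calc α * (R:ℝ)/K = α * R * (K:ℝ)⁻¹ := by ring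
      _ ≤ α * ((j:ℝ)+1) * (K:ℝ)⁻¹ := by
          apply mul_le_mul_of_nonneg_right _ hK'
          exact mul_le_mul_of_nonneg_left h1 hα0
      _ = α * ((j:ℝ)+1)/K := by ring
    have hcond : ((⟨j, hiK⟩ : Fin K) : ℕ) + 1 ≤ cnt p (α * (((⟨j, hiK⟩ : Fin K) : ℕ) + 1) / K) := by
      show j + 1 ≤ cnt p (α * ((j:ℝ) + 1)/K)
      calc j + 1 = m := hj.symm
      _ = cnt p (α * R / K) := hm
      _ ≤ cnt p (α * ((j:ℝ)+1)/K) := cnt_mono p hle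
    have := cond_le_bh hK p ⟨j, hiK⟩ hcond
    simp only [Fin.val_mk] at this
    omega
  omega

lemma bhRejects_eq (hK : 0 < K) (hα0 : 0 ≤ α) (p : Fin K → ℝ) (hR : 1 ≤ bhCount K α p) :
    bhRejects K α p = Finset.univ.filter fun k => p k ≤ α * (bhCount K α p) / K := by
  set R := bhCount K α p with hRdef
  ext k
  simp only [bhRejects, Finset.mem_filter, Finset.mem_univ, true_and]
  constructor
  · rintro ⟨i, hiR, hki⟩
    refine le_trans hki ?_
    rw [sortAsc_le_iff]
    calc i.1 + 1 ≤ R := hiR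
    _ = cnt p (α * R / K) := (cnt_bh_eq hK hα0 p hR).symm
  · intro h
    obtain ⟨j, hj⟩ : ∃ j, R = j + 1 := ⟨R - 1, by omega⟩
    have hjK : j < K := by have := bh_le_K (α := α) p; omega
    refine ⟨⟨j, hjK⟩, by simp only [Fin.val_mk]; omega, ?_⟩
    by_contra hlt
    push_neg at hlt
    have h1 : j + 1 ≤ cnt p (sortAsc p ⟨j, hjK⟩) := by
      have := (sortAsc_le_iff p ⟨j, hjK⟩ (sortAsc p ⟨j, hjK⟩)).mp le_rfl
      simpa using this
    have h2 : sortAsc p ⟨j, hjK⟩ ≤ α * R / K := by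
      rw [sortAsc_le_iff]
      calc (⟨j, hjK⟩ : Fin K).1 + 1 = R := by simp only [Fin.val_mk]; omega
      _ = cnt p (α * R / K) := (cnt_bh_eq hK hα0 p hR).symm
      _ ≤ cnt p (α * R / K) := le_rfl
    have hsub : insert k (Finset.univ.filter fun l => p l ≤ sortAsc p ⟨j, hjK⟩)
        ⊆ Finset.univ.filter fun l => p l ≤ α * R / K := by
      intro l hl
      rcases Finset.mem_insert.mp hl with rfl | hl
      · simp [h]
      · simp only [Finset.mem_filter, Finset.mem_univ, true_and] at hl ⊢
        exact le_trans hl h2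
    have hknot : k ∉ Finset.univ.filter fun l => p l ≤ sortAsc p ⟨j, hjK⟩ := by
      simp only [Finset.mem_filter, Finset.mem_univ, true_and, not_le]
      exact hlt
    have hcard := Finset.card_le_card hsub
    rw [Finset.card_insert_of_notMem hknot] at hcard
    have : cnt p (α * R / K) = R := cnt_bh_eq hK hα0 p hR
    unfold cnt at h1 this
    omega

lemma card_bhRejects (hK : 0 < K) (hα0 : 0 ≤ α) (p : Fin K → ℝ) (hR : 1 ≤ bhCount K α p) :
    (bhRejects K α p).card = bhCount K α p := by
  rw [bhRejects_eq hK hα0 p hR]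
  exact cnt_bh_eq hK hα0 p hR

lemma bhRejects_of_zero (p : Fin K → ℝ) (hR : bhCount K α p = 0) :
    bhRejects K α p = ∅ := by
  ext k
  simp only [bhRejects, Finset.mem_filter, Finset.mem_univ, true_and, Finset.notMem_empty,
    iff_false]
  rintro ⟨i, hi, -⟩
  omega

lemma bh_le_update (hK : 0 < K) (p : Fin K → ℝ) (k : Fin K) (h0 : 0 ≤ p k) :
    bhCount K α p ≤ bhCount K α (Function.update p k 0) := by
  rw [bhCount_eq hK, bhCount_eq hK]
  apply Finset.sup_mono
  apply Finset.monotone_filter_right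
  intro i _ hi
  refine le_trans hi (cnt_anti ?_ _)
  intro j
  rcases eq_or_ne j k with rfl | hne
  · simp [h0]
  · simp [Function.update_of_ne hne]

lemma one_le_bh_update (hK : 0 < K) (hα0 : 0 ≤ α) (p : Fin K → ℝ) (k : Fin K) :
    1 ≤ bhCount K α (Function.update p k 0) := by
  have hcond : ((⟨0, hK⟩ : Fin K) : ℕ) + 1
      ≤ cnt (Function.update p k 0) (α * ((((⟨0, hK⟩ : Fin K) : ℕ) : ℝ) + 1) / K) := by
    simp only [Fin.val_mk, Nat.cast_zero, zero_add]
    have hmem : k ∈ Finset.univ.filter fun j =>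
        Function.update p k 0 j ≤ α * 1 / K := by
      simp only [Finset.mem_filter, Finset.mem_univ, true_and, Function.update_self]
      positivity
    exact Finset.card_pos.mpr ⟨k, hmem⟩
  have h := cond_le_bh (α := α) hK (Function.update p k 0) ⟨0, hK⟩ hcond
  simpa using h

lemma cnt_update_eq (p : Fin K → ℝ) (k : Fin K) {t : ℝ} (ht : 0 ≤ t) (hpk : p k ≤ t) :
    cnt p t = cnt (Function.update p k 0) t := by
  unfold cnt
  congr 1
  apply Finset.filter_congr
  intro j _
  rcases eq_or_ne j k with rfl | hne
  · simp [hpk, ht]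
  · simp [Function.update_of_ne hne]

lemma bh_update_eq (hK : 0 < K) (hα0 : 0 ≤ α) (p : Fin K → ℝ) (k : Fin K) (h0 : 0 ≤ p k)
    (h : p k ≤ α * (bhCount K α (Function.update p k 0)) / K) :
    bhCount K α p = bhCount K α (Function.update p k 0) := by
  set R' := bhCount K α (Function.update p k 0) with hR'
  have hR'1 : 1 ≤ R' := one_le_bh_update hK hα0 p k
  have hR'K : R' ≤ K := bh_le_K _
  have ht : (0:ℝ) ≤ α * R' / K := by positivity
  have hcnt : cnt p (α * R' / K) = R' := by
    rw [cnt_update_eq p k ht h]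
    exact cnt_bh_eq hK hα0 _ hR'1
  refine le_antisymm (bh_le_update hK p k h0) ?_
  obtain ⟨j, hj⟩ : ∃ j, R' = j + 1 := ⟨R' - 1, by omega⟩
  have hjK : j < K := by omega
  have := cond_le_bh (α := α) hK p ⟨j, hjK⟩ ?_
  · simp only [Fin.val_mk] at this; omega
  · show j + 1 ≤ cnt p (α * ((j:ℝ) + 1) / K)
    have : ((j:ℝ) + 1) = (R' : ℝ) := by exact_mod_cast congrArg (Nat.cast (R := ℝ)) hj.symm
    rw [this, hcnt]
    omega

lemma bh_iff (hK : 0 < K) (hα0 : 0 ≤ α) (p : Fin K → ℝ) (k : Fin K) (h0 : 0 ≤ p k) :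
    p k ≤ α * (bhCount K α p) / K
      ↔ p k ≤ α * (bhCount K α (Function.update p k 0)) / K := by
  constructor
  · intro h
    refine le_trans h ?_
    have h1 : (bhCount K α p : ℝ) ≤ (bhCount K α (Function.update p k 0) : ℝ) := by
      exact_mod_cast bh_le_update hK p k h0
    have hK' : (0:ℝ) ≤ (K:ℝ)⁻¹ := by positivity
    calc α * (bhCount K α p) / K = α * (bhCount K α p) * (K:ℝ)⁻¹ := by ring
    _ ≤ α * (bhCount K α (Function.update p k 0)) * (K:ℝ)⁻¹ :=
        mul_le_mul_of_nonneg_right (mul_le_mul_of_nonneg_left h1 hα0) hK'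
    _ = _ := by ring
  · intro h
    rw [bh_update_eq hK hα0 p k h0 h]
    exact h

end BH2
namespace BH3
open BH BH2
variable {K : ℕ} {α : ℝ}

lemma fdp_identity (hK : 0 < K) (hα0 : 0 < α) (p : Fin K → ℝ) (N : Finset (Fin K))
    (hN : ∀ k ∈ N, 0 ≤ p k) :
    fdp (bhRejects K α p) N
      = ∑ k ∈ N, (if p k ≤ α * (bhCount K α (Function.update p k 0)) / K
          then ((bhCount K α (Function.update p k 0) : ℝ))⁻¹ else 0) := by
  rcases Nat.eq_zero_or_pos (bhCount K α p) with hR | hR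
  · rw [bhRejects_of_zero p hR]
    have : ∀ k ∈ N, (if p k ≤ α * (bhCount K α (Function.update p k 0)) / K
        then ((bhCount K α (Function.update p k 0) : ℝ))⁻¹ else 0) = 0 := by
      intro k hk
      rw [if_neg]
      intro h
      have := bh_update_eq hK hα0.le p k (hN k hk) h
      have h1 := one_le_bh_update (α := α) hK hα0.le p k
      omega
    rw [Finset.sum_congr rfl this]
    simp [fdp]
  · set R := bhCount K α p with hRdef
    have hDR : (bhRejects K α p).card = R := card_bhRejects hK hα0.le p hR
    have hmax : max (bhRejects K α p).card 1 = R := by omega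
    have hD : bhRejects K α p = Finset.univ.filter fun k => p k ≤ α * (R:ℝ) / K :=
      bhRejects_eq hK hα0.le p hR
    have hinter : bhRejects K α p ∩ N = N.filter fun k => p k ≤ α * (R:ℝ) / K := by
      rw [hD]
      ext k
      simp only [Finset.mem_inter, Finset.mem_filter, Finset.mem_univ, true_and]
      tauto
    unfold fdp
    rw [hmax, hinter, Finset.card_filter]
    push_cast
    rw [Finset.sum_div]
    apply Finset.sum_congr rfl
    intro k hk
    by_cases h : p k ≤ α * (R:ℝ) / K
    · have h' := (bh_iff hK hα0.le p k (hN k hk)).mp h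
      have heq : R = bhCount K α (Function.update p k 0) :=
        bh_update_eq hK hα0.le p k (hN k hk) h'
      rw [if_pos h, if_pos h', ← heq]
      rw [one_div]
    · have h' : ¬ p k ≤ α * (bhCount K α (Function.update p k 0)) / K := by
        intro hc
        exact h ((bh_iff hK hα0.le p k (hN k hk)).mpr hc)
      rw [if_neg h, if_neg h']
      simp

end BH3
namespace BH4
open BH BH2
variable {K : ℕ} {α : ℝ}

lemma measurable_cnt (t : ℝ) : Measurable (fun p : Fin K → ℝ => cnt p t) := by
  have : (fun p : Fin K → ℝ => cnt p t)
      = fun p => ∑ j : Fin K, if p j ≤ t then 1 else 0 := by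
    funext p
    exact Finset.card_filter _ _
  rw [this]
  apply Finset.measurable_sum
  intro j _
  exact Measurable.ite (measurableSet_le (measurable_pi_apply j) measurable_const)
    measurable_const measurable_const

instance : MeasurableSingletonClass (Fin K → ℕ) := by
  constructor
  intro f
  have : ({f} : Set (Fin K → ℕ)) = ⋂ i, (fun g : Fin K → ℕ => g i) ⁻¹' {f i} := by
    ext g
    simp [funext_iff]
  rw [this]
  exact MeasurableSet.iInter fun i => (measurable_pi_apply i) (measurableSet_singleton _)

lemma measurable_bhCount (hK : 0 < K) : Measurable (fun p : Fin K → ℝ => bhCount K α p) := by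
  have hrw : (fun p : Fin K → ℝ => bhCount K α p)
      = (fun n : Fin K → ℕ =>
          (Finset.univ.filter fun i : Fin K => i.1 + 1 ≤ n i).sup (fun i => i.1 + 1))
        ∘ (fun p => fun i : Fin K => cnt p (α * (i.1 + 1) / K)) := by
    funext p
    exact bhCount_eq hK p
  rw [hrw]
  exact (measurable_of_countable _).comp
    (measurable_pi_lambda _ fun i => measurable_cnt _)

end BH4
namespace BH5
open MeasureTheory ProbabilityTheory

variable {Ω : Type*} [MeasurableSpace Ω] {μ : Measure Ω} [IsProbabilityMeasure μ]
  {K : ℕ} {P : Fin K → Ω → ℝ} {N : Finset (Fin K)}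

lemma factor (hP : ∀ k, Measurable (P k))
    (h_iid : iIndepFun (fun k : {k // k ∈ N} => P k.1) μ)
    (h_block : IndepFun (fun ω => fun k : {k // k ∈ N} => P k.1 ω)
      (fun ω => fun k : {k // k ∉ N} => P k.1 ω) μ)
    (E : Fin K → Set ℝ) (hE : ∀ j, MeasurableSet (E j)) (A : Finset (Fin K)) :
    μ (⋂ j ∈ A, (P j) ⁻¹' (E j))
      = (∏ j ∈ A.filter (· ∈ N), μ ((P j) ⁻¹' (E j)))
        * μ (⋂ j ∈ A.filter (· ∉ N), (P j) ⁻¹' (E j)) := by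
  classical
  set X : Ω → ({k // k ∈ N} → ℝ) := fun ω => fun k : {k // k ∈ N} => P k.1 ω with hXdef
  set Y : Ω → ({k // k ∉ N} → ℝ) := fun ω => fun k : {k // k ∉ N} => P k.1 ω with hYdef
  set T₁ : Set ({k // k ∈ N} → ℝ) :=
    ⋂ (j : {k // k ∈ N}) (_ : j.1 ∈ A), (fun q => q j) ⁻¹' (E j.1) with hT₁def
  set T₂ : Set ({k // k ∉ N} → ℝ) :=
    ⋂ (j : {k // k ∉ N}) (_ : j.1 ∈ A), (fun q => q j) ⁻¹' (E j.1) with hT₂def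
  have hT₁ : MeasurableSet T₁ :=
    MeasurableSet.iInter fun j => MeasurableSet.iInter fun _ =>
      (measurable_pi_apply j) (hE j.1)
  have hT₂ : MeasurableSet T₂ :=
    MeasurableSet.iInter fun j => MeasurableSet.iInter fun _ =>
      (measurable_pi_apply j) (hE j.1)
  have hX : X ⁻¹' T₁ = ⋂ j ∈ A.filter (· ∈ N), (P j) ⁻¹' (E j) := by
    ext ω
    simp only [hXdef, hT₁def, Set.mem_preimage, Set.mem_iInter, Finset.mem_filter]
    constructor
    · rintro h j ⟨hjA, hjN⟩
      exact h ⟨j, hjN⟩ hjA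
    · intro h j hjA
      exact h j.1 ⟨hjA, j.2⟩
  have hY : Y ⁻¹' T₂ = ⋂ j ∈ A.filter (· ∉ N), (P j) ⁻¹' (E j) := by
    ext ω
    simp only [hYdef, hT₂def, Set.mem_preimage, Set.mem_iInter, Finset.mem_filter]
    constructor
    · rintro h j ⟨hjA, hjN⟩
      exact h ⟨j, hjN⟩ hjA
    · intro h j hjA
      exact h j.1 ⟨hjA, j.2⟩
  have hsplit : (⋂ j ∈ A, (P j) ⁻¹' (E j)) = (X ⁻¹' T₁) ∩ (Y ⁻¹' T₂) := by
    rw [hX, hY]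
    ext ω
    simp only [Set.mem_inter_iff, Set.mem_iInter, Finset.mem_filter, Set.mem_preimage]
    constructor
    · intro h
      exact ⟨fun j hj => h j hj.1, fun j hj => h j hj.1⟩
    · rintro ⟨h1, h2⟩ j hj
      by_cases hjN : j ∈ N
      · exact h1 j ⟨hj, hjN⟩
      · exact h2 j ⟨hj, hjN⟩
  have hblockeq := (indepFun_iff_measure_inter_preimage_eq_mul.mp h_block) T₁ T₂ hT₁ hT₂
  have hXT : μ (X ⁻¹' T₁) = ∏ j ∈ A.filter (· ∈ N), μ ((P j) ⁻¹' (E j)) := by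
    rw [iIndepFun_iff_measure_inter_preimage_eq_mul] at h_iid
    have h1 := h_iid (Finset.univ.filter fun j : {k // k ∈ N} => j.1 ∈ A)
      (sets := fun j => E j.1) (fun j _ => hE j.1)
    have h2 : X ⁻¹' T₁
        = ⋂ j ∈ (Finset.univ.filter fun j : {k // k ∈ N} => j.1 ∈ A),
            (fun ω => P j.1 ω) ⁻¹' (E j.1) := by
      rw [hX]
      ext ω
      simp only [Set.mem_iInter, Finset.mem_filter, Finset.mem_univ, true_and,
        Set.mem_preimage]
      constructor
      · intro h j hjA
        exact h j.1 ⟨hjA, j.2⟩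
      · rintro h j ⟨hjA, hjN⟩
        exact h ⟨j, hjN⟩ hjA
    rw [h2, h1]
    refine Finset.prod_bij (fun j _ => j.1) ?_ ?_ ?_ ?_
    · intro j hj
      simp only [Finset.mem_filter, Finset.mem_univ, true_and] at hj ⊢
      exact ⟨hj, j.2⟩
    · intro a _ b _ hab
      exact Subtype.ext hab
    · intro j hj
      simp only [Finset.mem_filter] at hj
      exact ⟨⟨j, hj.2⟩, by simp [hj.1], rfl⟩
    · intro j _
      rfl
  rw [hsplit, hblockeq, hXT, hY]

lemma indep_update (hP : ∀ k, Measurable (P k))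
    (h_iid : iIndepFun (fun k : {k // k ∈ N} => P k.1) μ)
    (h_block : IndepFun (fun ω => fun k : {k // k ∈ N} => P k.1 ω)
      (fun ω => fun k : {k // k ∉ N} => P k.1 ω) μ)
    {k : Fin K} (hk : k ∈ N) :
    IndepFun (P k) (fun ω => Function.update (fun j => P j ω) k 0) μ := by
  classical
  set W : Ω → (Fin K → ℝ) := fun ω => Function.update (fun j => P j ω) k 0 with hWdef
  have hW : Measurable W := by
    apply measurable_pi_lambda
    intro j
    rcases eq_or_ne j k with rfl | hne
    · simpa [hWdef] using measurable_const
    · have : (fun ω => W ω j) = P j := by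
        funext ω
        simp [hWdef, Function.update_of_ne hne]
      rw [this]; exact hP j
  show Indep (MeasurableSpace.comap (P k) inferInstance)
    (MeasurableSpace.comap W inferInstance) μ
  have hgen1 : MeasurableSpace.comap (P k) inferInstance
      = MeasurableSpace.generateFrom ((fun s => (P k) ⁻¹' s) '' {s : Set ℝ | MeasurableSet s}) := by
    conv_lhs => rw [← MeasurableSpace.generateFrom_measurableSet (α := ℝ)]
    rw [MeasurableSpace.comap_generateFrom]
  have hgen2 : MeasurableSpace.comap W inferInstance
      = MeasurableSpace.generateFrom ((fun S => W ⁻¹' S) ''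
          (Set.pi Set.univ '' Set.pi Set.univ fun _ : Fin K => {s : Set ℝ | MeasurableSet s})) := by
    conv_lhs => rw [show (inferInstance : MeasurableSpace (Fin K → ℝ)) = MeasurableSpace.pi from rfl,
      ← generateFrom_pi]
    rw [MeasurableSpace.comap_generateFrom]
  refine ProbabilityTheory.IndepSets.indep ?_ ?_ ?_ ?_ hgen1 hgen2 ?_
  · exact (hP k).comap_le
  · exact hW.comap_le
  · rintro s ⟨s', hs', rfl⟩ t ⟨t', ht', rfl⟩ -
    refine ⟨s' ∩ t', ?_, by simp [Set.preimage_inter]⟩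
    simp only [Set.mem_setOf_eq] at hs' ht' ⊢
    exact hs'.inter ht'
  · exact (isPiSystem_pi).comap W
  · -- IndepSets
    rintro A B ⟨s, hs, rfl⟩ ⟨B', ⟨S, hS, rfl⟩, rfl⟩
    simp only [Set.mem_setOf_eq] at hs
    rw [ae_dirac_eq, Filter.eventually_pure]
    simp only [Kernel.const_apply]
    show μ ((P k ⁻¹' s) ∩ (W ⁻¹' (Set.pi Set.univ S)))
      = μ (P k ⁻¹' s) * μ (W ⁻¹' (Set.pi Set.univ S))
    have hSm : ∀ j, MeasurableSet (S j) := fun j => hS j (Set.mem_univ j)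
    by_cases h0 : (0:ℝ) ∈ S k
    · have hpre : W ⁻¹' (Set.pi Set.univ S) = ⋂ j ∈ Finset.univ.erase k, (P j) ⁻¹' (S j) := by
        ext ω
        simp only [Set.mem_preimage, Set.mem_pi, Set.mem_univ, forall_true_left,
          Set.mem_iInter, Finset.mem_erase, Finset.mem_univ, and_true]
        constructor
        · intro h j hj
          have := h j
          simpa [hWdef, Function.update_of_ne hj] using this
        · intro h j
          rcases eq_or_ne j k with rfl | hne
          · simpa [hWdef] using h0
          · simpa [hWdef, Function.update_of_ne hne] using h j hne
      set E : Fin K → Set ℝ := fun j => if j = k then s else S j with hEdef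
      have hEm : ∀ j, MeasurableSet (E j) := by
        intro j
        rcases eq_or_ne j k with rfl | hne
        · simpa [hEdef] using hs
        · simpa [hEdef, hne] using hSm j
      have hiA : P k ⁻¹' s ∩ (⋂ j ∈ Finset.univ.erase k, (P j) ⁻¹' (S j))
          = ⋂ j ∈ (Finset.univ : Finset (Fin K)), (P j) ⁻¹' (E j) := by
        ext ω
        simp only [Set.mem_inter_iff, Set.mem_iInter, Set.mem_preimage, Finset.mem_erase,
          Finset.mem_univ, and_true, true_implies]
        constructor
        · rintro ⟨h1, h2⟩ j
          rcases eq_or_ne j k with rfl | hne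
          · simpa [hEdef] using h1
          · have := h2 j hne
            simpa [hEdef, hne] using this
        · intro h
          constructor
          · have := h k
            simpa [hEdef] using this
          · intro j hne
            have := h j
            simpa [hEdef, hne] using this
      have h1 := factor hP h_iid h_block E hEm Finset.univ
      have h2 := factor hP h_iid h_block S hSm (Finset.univ.erase k)
      rw [hpre, hiA, h1, h2]
      have hfilter1 : Finset.univ.filter (· ∈ N)
          = insert k ((Finset.univ.erase k).filter (· ∈ N)) := by
        ext j
        simp only [Finset.mem_filter, Finset.mem_univ, true_and, Finset.mem_insert,
          Finset.mem_erase]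
        constructor
        · intro hj
          rcases eq_or_ne j k with rfl | hne
          · exact Or.inl rfl
          · exact Or.inr ⟨⟨hne, by simp⟩, hj⟩
        · rintro (rfl | ⟨-, hj⟩)
          · exact hk
          · exact hj
      have hknot : k ∉ (Finset.univ.erase k).filter (· ∈ N) := by
        simp
      have hprod1 : ∏ j ∈ Finset.univ.filter (· ∈ N), μ ((P j) ⁻¹' (E j))
          = μ ((P k) ⁻¹' s) * ∏ j ∈ (Finset.univ.erase k).filter (· ∈ N), μ ((P j) ⁻¹' (S j)) := by
        rw [hfilter1, Finset.prod_insert hknot]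
        congr 1
        · simp [hEdef]
        · apply Finset.prod_congr rfl
          intro j hj
          simp only [Finset.mem_filter, Finset.mem_erase] at hj
          simp [hEdef, hj.1.1]
      have hfilter2 : Finset.univ.filter (· ∉ N) = (Finset.univ.erase k).filter (· ∉ N) := by
        ext j
        simp only [Finset.mem_filter, Finset.mem_univ, true_and, Finset.mem_erase]
        constructor
        · intro hj
          refine ⟨⟨?_, by simp⟩, hj⟩
          rintro rfl
          exact hj hk
        · tauto
      have hiE : (⋂ j ∈ Finset.univ.filter (· ∉ N), (P j) ⁻¹' (E j))
          = ⋂ j ∈ (Finset.univ.erase k).filter (· ∉ N), (P j) ⁻¹' (S j) := by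
        rw [hfilter2]
        apply Set.iInter₂_congr
        intro j hj
        simp only [Finset.mem_filter, Finset.mem_erase] at hj
        simp [hEdef, hj.1.1]
      rw [hprod1, hiE]
      ring
    · have hpre : W ⁻¹' (Set.pi Set.univ S) = ∅ := by
        ext ω
        simp only [Set.mem_preimage, Set.mem_pi, Set.mem_univ, forall_true_left,
          Set.mem_empty_iff_false, iff_false, not_forall]
        exact ⟨k, by simpa [hWdef] using h0⟩
      rw [hpre]
      simp

end BH5
namespace BH6
open MeasureTheory ProbabilityTheory BH BH2 BH4 BH5

variable {Ω : Type*} [MeasurableSpace Ω] {μ : Measure Ω} [IsProbabilityMeasure μ]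
  {K : ℕ} {P : Fin K → Ω → ℝ} {N : Finset (Fin K)}

lemma measurable_W (hP : ∀ k, Measurable (P k)) (k : Fin K) :
    Measurable (fun ω => Function.update (fun j => P j ω) k 0) := by
  apply measurable_pi_lambda
  intro j
  rcases eq_or_ne j k with rfl | hne
  · simpa using measurable_const
  · have heq : (fun ω => Function.update (fun j' => P j' ω) k 0 j) = P j := by
      funext ω
      simp [Function.update_of_ne hne]
    rw [heq]
    exact hP j

lemma integral_gk {α : ℝ} (hK : 0 < K) (hα0 : 0 < α) (hα1 : α < 1)
    (hP : ∀ k, Measurable (P k))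
    (h_iid : iIndepFun (fun k : {k // k ∈ N} => P k.1) μ)
    (h_block : IndepFun (fun ω => fun k : {k // k ∈ N} => P k.1 ω)
      (fun ω => fun k : {k // k ∉ N} => P k.1 ω) μ)
    {k : Fin K} (hk : k ∈ N)
    (h_unif : μ.map (P k) = volume.restrict (Set.Icc (0 : ℝ) 1)) :
    ∫ ω, (if P k ω ≤ α * (bhCount K α (Function.update (fun j => P j ω) k 0) : ℝ) / K
        then ((bhCount K α (Function.update (fun j => P j ω) k 0) : ℝ))⁻¹ else 0) ∂μ
      = α / K := by
  classical
  set W : Ω → (Fin K → ℝ) := fun ω => Function.update (fun j => P j ω) k 0 with hWdef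
  have hW : Measurable W := measurable_W hP k
  have hInd : IndepFun (P k) W μ := indep_update hP h_iid h_block hk
  have hbh : Measurable (fun p : Fin K → ℝ => bhCount K α p) := measurable_bhCount hK
  -- cdf of P k
  have hcdf : ∀ t : ℝ, 0 ≤ t → t ≤ 1 → μ ((P k) ⁻¹' (Set.Iic t)) = ENNReal.ofReal t := by
    intro t ht0 ht1
    have h1 : μ ((P k) ⁻¹' (Set.Iic t)) = (μ.map (P k)) (Set.Iic t) :=
      (Measure.map_apply (hP k) measurableSet_Iic).symm
    rw [h1, h_unif, Measure.restrict_apply measurableSet_Iic]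
    have : Set.Iic t ∩ Set.Icc (0:ℝ) 1 = Set.Icc 0 t := by
      ext x
      simp only [Set.mem_inter_iff, Set.mem_Iic, Set.mem_Icc]
      constructor
      · rintro ⟨h1, h2, h3⟩; exact ⟨h2, h1⟩
      · rintro ⟨h1, h2⟩; exact ⟨h2, h1, le_trans h2 ht1⟩
    rw [this, Real.volume_Icc]
    norm_num
  -- pointwise decomposition
  have hg : ∀ ω, (if P k ω ≤ α * (bhCount K α (W ω) : ℝ) / K
        then ((bhCount K α (W ω) : ℝ))⁻¹ else 0)
      = ∑ m ∈ Finset.Icc 1 K,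
          (if P k ω ≤ α * (m : ℝ) / K then (1:ℝ) else 0)
            * (if bhCount K α (W ω) = m then ((m : ℝ))⁻¹ else 0) := by
    intro ω
    rw [Finset.sum_eq_single (bhCount K α (W ω))]
    · by_cases h : P k ω ≤ α * (bhCount K α (W ω) : ℝ) / K
      · simp [h]
      · simp [h]
    · intro m _ hm
      simp [Ne.symm hm]
    · intro hmem
      exfalso
      apply hmem
      rw [Finset.mem_Icc]
      exact ⟨one_le_bh_update hK hα0.le (fun j => P j ω) k, bh_le_K _⟩
  show ∫ ω, (if P k ω ≤ α * (bhCount K α (W ω) : ℝ) / K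
      then ((bhCount K α (W ω) : ℝ))⁻¹ else 0) ∂μ = α / K
  simp_rw [hg]
  -- integrate the sum
  have hsm : ∀ m : ℕ, MeasurableSet {ω | bhCount K α (W ω) = m} := by
    intro m
    exact hW (hbh (measurableSet_singleton m))
  have hint1 : ∀ m : ℕ, Integrable (fun ω => if P k ω ≤ α * (m : ℝ) / K then (1:ℝ) else 0) μ := by
    intro m
    have : (fun ω => if P k ω ≤ α * (m : ℝ) / K then (1:ℝ) else 0)
        = Set.indicator ((P k) ⁻¹' (Set.Iic (α * (m : ℝ) / K))) (fun _ => (1:ℝ)) := by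
      funext ω
      simp [Set.indicator_apply]
    rw [this]
    exact (integrable_const _).indicator (hP k measurableSet_Iic)
  have hint2 : ∀ m : ℕ, Integrable (fun ω => if bhCount K α (W ω) = m then ((m:ℝ))⁻¹ else 0) μ := by
    intro m
    have : (fun ω => if bhCount K α (W ω) = m then ((m:ℝ))⁻¹ else 0)
        = Set.indicator {ω | bhCount K α (W ω) = m} (fun _ => ((m:ℝ))⁻¹) := by
      funext ω
      simp [Set.indicator_apply]
    rw [this]
    exact (integrable_const _).indicator (hsm m)
  rw [integral_finset_sum]
  swap
  · intro m _
    have hprod : (fun ω => (if P k ω ≤ α * (m:ℝ)/K then (1:ℝ) else 0)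
        * (if bhCount K α (W ω) = m then ((m:ℝ))⁻¹ else 0))
        = Set.indicator ((P k) ⁻¹' (Set.Iic (α * (m:ℝ)/K)) ∩ {ω | bhCount K α (W ω) = m})
            (fun _ => ((m:ℝ))⁻¹) := by
      funext ω
      by_cases h1 : P k ω ≤ α*(m:ℝ)/K <;> by_cases h2 : bhCount K α (W ω) = m <;>
        simp [Set.indicator_apply, h1, h2]
    rw [hprod]
    exact (integrable_const _).indicator ((hP k measurableSet_Iic).inter (hsm m))
  -- each summand
  have hterm : ∀ m ∈ Finset.Icc 1 K,
      ∫ ω, (if P k ω ≤ α * (m : ℝ) / K then (1:ℝ) else 0)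
          * (if bhCount K α (W ω) = m then ((m : ℝ))⁻¹ else 0) ∂μ
        = (α / K) * (μ {ω | bhCount K α (W ω) = m}).toReal := by
    intro m hm
    rw [Finset.mem_Icc] at hm
    have hsep : ∫ ω, (if P k ω ≤ α * (m : ℝ) / K then (1:ℝ) else 0)
          * (if bhCount K α (W ω) = m then ((m : ℝ))⁻¹ else 0) ∂μ
        = (∫ ω, (if P k ω ≤ α * (m : ℝ) / K then (1:ℝ) else 0) ∂μ)
          * ∫ ω, (if bhCount K α (W ω) = m then ((m : ℝ))⁻¹ else 0) ∂μ := by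
      have hφ : Measurable (fun x : ℝ => if x ≤ α * (m : ℝ) / K then (1:ℝ) else 0) :=
        Measurable.ite measurableSet_Iic measurable_const measurable_const
      have hψ : Measurable (fun p : Fin K → ℝ => if bhCount K α p = m then ((m:ℝ))⁻¹ else 0) :=
        Measurable.ite (hbh (measurableSet_singleton m)) measurable_const measurable_const
      exact ProbabilityTheory.IndepFun.integral_fun_mul_eq_mul_integral (hInd.comp hφ hψ) (hint1 m).1 (hint2 m).1
    rw [hsep]
    -- first factor
    have hf1 : ∫ ω, (if P k ω ≤ α * (m : ℝ) / K then (1:ℝ) else 0) ∂μ = α * (m : ℝ) / K := by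
      have heq : (fun ω => if P k ω ≤ α * (m : ℝ) / K then (1:ℝ) else 0)
          = Set.indicator ((P k) ⁻¹' (Set.Iic (α * (m : ℝ) / K))) (fun _ => (1:ℝ)) := by
        funext ω
        simp [Set.indicator_apply]
      rw [heq, integral_indicator_const _ (hP k measurableSet_Iic)]
      have hm0 : (0:ℝ) ≤ α * (m : ℝ) / K := by positivity
      have hm1 : α * (m : ℝ) / K ≤ 1 := by
        have h1 : (m : ℝ) ≤ (K : ℝ) := by exact_mod_cast hm.2
        have hKpos : (0:ℝ) < (K:ℝ) := by exact_mod_cast hK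
        rw [div_le_one hKpos]
        nlinarith
      rw [measureReal_def, hcdf _ hm0 hm1]
      rw [ENNReal.toReal_ofReal hm0]
      simp
    -- second factor
    have hf2 : ∫ ω, (if bhCount K α (W ω) = m then ((m : ℝ))⁻¹ else 0) ∂μ
        = ((m:ℝ))⁻¹ * (μ {ω | bhCount K α (W ω) = m}).toReal := by
      have heq : (fun ω => if bhCount K α (W ω) = m then ((m:ℝ))⁻¹ else 0)
          = Set.indicator {ω | bhCount K α (W ω) = m} (fun _ => ((m:ℝ))⁻¹) := by
        funext ω
        simp [Set.indicator_apply]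
      rw [heq, integral_indicator_const _ (hsm m)]
      simp [mul_comm, measureReal_def]
    rw [hf1, hf2]
    have hmne : (m:ℝ) ≠ 0 := by
      have : 1 ≤ m := hm.1
      positivity
    field_simp
  rw [Finset.sum_congr rfl hterm, ← Finset.mul_sum]
  -- partition
  have hpart : ∑ m ∈ Finset.Icc 1 K, μ {ω | bhCount K α (W ω) = m} = 1 := by
    have hdisj : (Finset.Icc 1 K : Set ℕ).PairwiseDisjoint
        (fun m => {ω | bhCount K α (W ω) = m}) := by
      intro a _ b _ hab
      apply Set.disjoint_left.mpr
      intro ω ha hb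
      exact hab (ha.symm.trans hb)
    rw [← measure_biUnion_finset hdisj (fun m _ => hsm m)]
    have : ⋃ m ∈ Finset.Icc 1 K, {ω | bhCount K α (W ω) = m} = Set.univ := by
      ext ω
      simp only [Set.mem_iUnion, Set.mem_setOf_eq, Set.mem_univ, iff_true]
      exact ⟨bhCount K α (W ω), Finset.mem_Icc.mpr
        ⟨one_le_bh_update hK hα0.le (fun j => P j ω) k, bh_le_K _⟩, rfl⟩
    rw [this]
    exact measure_univ
  have htr : ∑ m ∈ Finset.Icc 1 K, (μ {ω | bhCount K α (W ω) = m}).toReal = 1 := by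
    rw [← ENNReal.toReal_sum (fun m _ => measure_ne_top μ _), hpart]
    simp
  rw [htr, mul_one]

end BH6
namespace BH6
open MeasureTheory ProbabilityTheory BH BH2 BH4 BH5

variable {Ω : Type*} [MeasurableSpace Ω] {μ : Measure Ω} [IsProbabilityMeasure μ]
  {K : ℕ} {P : Fin K → Ω → ℝ} {N : Finset (Fin K)}

lemma integrable_gk {α : ℝ} (hK : 0 < K) (hα0 : 0 < α)
    (hP : ∀ k, Measurable (P k)) (k : Fin K) :
    Integrable (fun ω =>
      (if P k ω ≤ α * (bhCount K α (Function.update (fun j => P j ω) k 0) : ℝ) / K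
        then ((bhCount K α (Function.update (fun j => P j ω) k 0) : ℝ))⁻¹ else 0)) μ := by
  classical
  set W : Ω → (Fin K → ℝ) := fun ω => Function.update (fun j => P j ω) k 0 with hWdef
  have hW : Measurable W := measurable_W hP k
  have hbh : Measurable (fun p : Fin K → ℝ => bhCount K α p) := measurable_bhCount hK
  have hsm : ∀ m : ℕ, MeasurableSet {ω | bhCount K α (W ω) = m} := by
    intro m
    exact hW (hbh (measurableSet_singleton m))
  have hg : ∀ ω, (if P k ω ≤ α * (bhCount K α (W ω) : ℝ) / K
        then ((bhCount K α (W ω) : ℝ))⁻¹ else 0)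
      = ∑ m ∈ Finset.Icc 1 K,
          (if P k ω ≤ α * (m : ℝ) / K then (1:ℝ) else 0)
            * (if bhCount K α (W ω) = m then ((m : ℝ))⁻¹ else 0) := by
    intro ω
    rw [Finset.sum_eq_single (bhCount K α (W ω))]
    · by_cases h : P k ω ≤ α * (bhCount K α (W ω) : ℝ) / K
      · simp [h]
      · simp [h]
    · intro m _ hm
      simp [Ne.symm hm]
    · intro hmem
      exfalso
      apply hmem
      rw [Finset.mem_Icc]
      exact ⟨BH2.one_le_bh_update hK hα0.le (fun j => P j ω) k, BH2.bh_le_K _⟩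
  show Integrable (fun ω => (if P k ω ≤ α * (bhCount K α (W ω) : ℝ) / K
      then ((bhCount K α (W ω) : ℝ))⁻¹ else 0)) μ
  simp_rw [hg]
  apply MeasureTheory.integrable_finset_sum
  intro m _
  have hprod : (fun ω => (if P k ω ≤ α * (m:ℝ)/K then (1:ℝ) else 0)
      * (if bhCount K α (W ω) = m then ((m:ℝ))⁻¹ else 0))
      = Set.indicator ((P k) ⁻¹' (Set.Iic (α * (m:ℝ)/K)) ∩ {ω | bhCount K α (W ω) = m})
          (fun _ => ((m:ℝ))⁻¹) := by
    funext ω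
    by_cases h1 : P k ω ≤ α*(m:ℝ)/K <;> by_cases h2 : bhCount K α (W ω) = m <;>
      simp [Set.indicator_apply, h1, h2]
  rw [hprod]
  exact (integrable_const _).indicator ((hP k measurableSet_Iic).inter (hsm m))

end BH6

/-- **Theorem 1 (Benjamini–Hochberg 1995).** If the null p-values are i.i.d. uniform on
`[0,1]` and independent of the non-null p-values, the BH procedure at level `α ∈ (0,1)`
has FDR exactly `α K₀ / K`. -/
theorem bh_fdr_iid_uniform
    {Ω : Type*} [MeasurableSpace Ω] (μ : Measure Ω) [IsProbabilityMeasure μ]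
    {K : ℕ} (hK : 0 < K) {α : ℝ} (hα : α ∈ Set.Ioo (0 : ℝ) 1)
    (P : Fin K → Ω → ℝ) (hP : ∀ k, Measurable (P k)) (N : Finset (Fin K))
    (h_unif : ∀ k ∈ N, μ.map (P k) = volume.restrict (Set.Icc (0 : ℝ) 1))
    (h_iid : iIndepFun (fun k : {k // k ∈ N} => P k.1) μ)
    (h_block : IndepFun (fun ω => fun k : {k // k ∈ N} => P k.1 ω)
      (fun ω => fun k : {k // k ∉ N} => P k.1 ω) μ) :
    ∫ ω, fdp (bhRejects K α (fun k => P k ω)) N ∂μ = α * N.card / K := by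
  classical
  obtain ⟨hα0, hα1⟩ := hα
  have hae : ∀ᵐ ω ∂μ, ∀ k ∈ N, 0 ≤ P k ω := by
    rw [Filter.eventually_all_finset]
    intro k hk
    rw [MeasureTheory.ae_iff]
    have hset : {ω | ¬ 0 ≤ P k ω} = (P k) ⁻¹' (Set.Iio 0) := by
      ext ω
      simp [not_le]
    rw [hset, ← Measure.map_apply (hP k) measurableSet_Iio, h_unif k hk,
      Measure.restrict_apply measurableSet_Iio]
    have : Set.Iio (0:ℝ) ∩ Set.Icc 0 1 = ∅ := by
      ext x
      simp only [Set.mem_inter_iff, Set.mem_Iio, Set.mem_Icc, Set.mem_empty_iff_false, iff_false]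
      rintro ⟨h1, h2, -⟩
      linarith
    rw [this]
    simp
  have hfdpae : ∀ᵐ ω ∂μ, fdp (bhRejects K α (fun k => P k ω)) N
      = ∑ k ∈ N, (if P k ω ≤ α * (bhCount K α (Function.update (fun j => P j ω) k 0) : ℝ) / K
          then ((bhCount K α (Function.update (fun j => P j ω) k 0) : ℝ))⁻¹ else 0) := by
    filter_upwards [hae] with ω h
    exact BH3.fdp_identity hK hα0 (fun k => P k ω) N h
  rw [integral_congr_ae hfdpae,
    integral_finset_sum N (fun k _ => BH6.integrable_gk hK hα0 hP k)]
  rw [Finset.sum_congr rfl (fun k hk =>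
    BH6.integral_gk hK hα0 hα1 hP h_iid h_block hk (h_unif k hk))]
  rw [Finset.sum_const, nsmul_eq_mul]
  ring
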